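/- Let f, h ∈ F_q[X] be non-constant and t₀ ∈ F_q. If f(h(X)) - t₀ splits into distinct linear factors over F_q, then f(X) - t₀ splits into deg f distinct linear factors over F_q. -/

import Mathlib

open Polynomial

/-- If `f(h(X)) - t₀` splits into distinct linear factors over `F`, then
`f(X) - t₀` splits into `deg f` distinct linear factors over `F`. -/
theorem outer_splits {F : Type*} [Field F] [DecidableEq F]
    (f h : F[X]) (hf : 1 ≤ f.natDegree) (hh : 1 ≤ h.natDegree) (t₀ : F)
    (hsplit : ((f.comp h - C t₀).map (RingHom.id F)).Splits)
    (hsep : Squarefree (f.comp h - C t₀)) :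
    ((f - C t₀).map (RingHom.id F)).Splits ∧ Squarefree (f - C t₀) ∧
      (f - C t₀).roots.toFinset.card = f.natDegree := by
  rw [Polynomial.map_id] at hsplit ⊢
  set g := f - C t₀ with hgdef
  have hcomp : g.comp h = f.comp h - C t₀ := by
    simp [hgdef, sub_comp]
  rw [← hcomp] at hsplit hsep
  have hgch0 : g.comp h ≠ 0 := by
    rintro h0
    rw [h0] at hsep
    exact not_squarefree_zero hsep
  have hg0 : g ≠ 0 := by
    rintro h0
    rw [h0] at hgch0
    simp at hgch0
  -- Squarefree g
  have hsq : Squarefree g := by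
    intro x hx
    have hxch : (x.comp h) * (x.comp h) ∣ g.comp h := by
      obtain ⟨c, hc⟩ := hx
      exact ⟨c.comp h, by rw [hc, mul_comp, mul_comp]⟩
    have hu := hsep _ hxch
    have hx0 : x ≠ 0 := by
      rintro rfl
      simp at hu
    have hdeg : x.natDegree = 0 := by
      have h1 : (x.comp h).natDegree = x.natDegree * h.natDegree := natDegree_comp
      have h2 : (x.comp h).natDegree = 0 := natDegree_eq_zero_of_isUnit hu
      rw [h1] at h2
      rcases Nat.mul_eq_zero.mp h2 with h3 | h3
      · exact h3
      · omega
    obtain ⟨c, rfl⟩ := natDegree_eq_zero.mp hdeg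
    simpa using hu
  -- Splits g
  have hsplits : g.Splits := by
    rw [splits_iff_splits]
    refine Or.inr fun {p} hp hpd => ?_
    have hpch : p.comp h ∣ g.comp h := by
      obtain ⟨c, hc⟩ := hpd
      exact ⟨c.comp h, by rw [hc, mul_comp]⟩
    have hpchs : (p.comp h).Splits :=
      hsplit.of_dvd hgch0 hpch
    have hp0 : p ≠ 0 := hp.ne_zero
    have hpdeg : (p.comp h).natDegree = p.natDegree * h.natDegree := natDegree_comp
    have hpnd : 1 ≤ p.natDegree := hp.natDegree_pos
    have hdne : (p.comp h).degree ≠ 0 := by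
      apply degree_ne_of_natDegree_ne
      rw [hpdeg]
      positivity
    obtain ⟨x, hx⟩ := hpchs.exists_eval_eq_zero hdne
    have hroot : p.IsRoot (h.eval x) := by
      rw [eval_comp] at hx
      exact hx
    have hdvd : (X - C (h.eval x)) ∣ p := dvd_iff_isRoot.mpr hroot
    -- p irreducible, divisible by linear poly ⇒ degree 1
    have : p.degree = 1 := by
      rcases hp.isUnit_or_isUnit (b := p / (X - C (h.eval x)))
          (by rw [EuclideanDomain.mul_div_cancel' (X_sub_C_ne_zero _) hdvd]) with h1 | h1
      · exact absurd h1 (not_isUnit_X_sub_C _)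
      · have hq := isUnit_iff.mp h1
        obtain ⟨c, hc0, hc⟩ := hq
        have : p = (X - C (h.eval x)) * C c := by
          rw [hc, EuclideanDomain.mul_div_cancel' (X_sub_C_ne_zero _) hdvd]
        rw [this, degree_mul, degree_X_sub_C, degree_C hc0.ne_zero]
        simp
    exact this
  refine ⟨hsplits, hsq, ?_⟩
  -- Nodup roots from squarefree
  have hnodup : g.roots.Nodup := by
    rw [Multiset.nodup_iff_count_le_one]
    intro a
    by_contra hcount
    push_neg at hcount
    have h2 : 2 ≤ rootMultiplicity a g := by
      rw [← count_roots]; omega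
    have hdvd : (X - C a) * (X - C a) ∣ g := by
      have := pow_rootMultiplicity_dvd g a
      calc (X - C a) * (X - C a) = (X - C a) ^ 2 := by ring
        _ ∣ (X - C a) ^ rootMultiplicity a g := pow_dvd_pow _ h2
        _ ∣ g := this
    exact not_isUnit_X_sub_C a (hsq _ hdvd)
  rw [Multiset.toFinset_card_of_nodup hnodup, splits_iff_card_roots.mp hsplits,
    hgdef, natDegree_sub_C]
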